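/- Let X be a locally compact non-compact Hausdorff abelian topological group with Haar measure and let φ : X → ℂ be a bounded Borel function. The following are equivalent: (1) φ is weakly vanishing at infinity, i.e. ∫_{a+K} |φ(x)| dx → 0 as a → ∞ for every compact K ⊆ X; (2) the convolution θ * |φ| belongs to C₀(X) for every θ ∈ C_c(X); (3) lim_{F_w} φ = 0, i.e. for every ε > 0 the set {x ∈ X : |φ(x)| > ε} is w-small at infinity. -/

import Mathlib

open MeasureTheory Filter
open scoped ENNReal Pointwise Convolution

/-- For a bounded Borel function `φ` on a locally compact non-compact
Hausdorff abelian group `X` with Haar measure `μ`, the following are equivalent: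
(1) `φ` is weakly vanishing at infinity, i.e. `∫_{a+K} |φ| dμ → 0` as `a → ∞` for every
compact `K`; (2) `θ * |φ| ∈ C₀(X)` for every `θ ∈ C_c(X)`;
(3) `lim_{F_w} φ = 0`, i.e. for every `ε > 0` the set `{|φ| > ε}` is w-small at
infinity. -/
theorem stmt11 {X : Type*} [AddCommGroup X] [TopologicalSpace X] [IsTopologicalAddGroup X]
    [LocallyCompactSpace X] [T2Space X] [NoncompactSpace X]
    [MeasurableSpace X] [BorelSpace X] (μ : Measure X) [μ.IsAddHaarMeasure]
    (φ : X → ℂ) (hmeas : Measurable φ) (hbdd : ∃ M : ℝ, ∀ x, ‖φ x‖ ≤ M) :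
    -- (1) ↔ (2)
    ((∀ K : Set X, IsCompact K →
        Tendsto (fun a : X => ∫ x in a +ᵥ K, ‖φ x‖ ∂μ) (cocompact X) (nhds 0)) ↔
      (∀ θ : C(X, ℂ), HasCompactSupport ⇑θ →
        Continuous (fun a : X => ∫ x, θ (a - x) * (‖φ x‖ : ℂ) ∂μ) ∧
        Tendsto (fun a : X => ∫ x, θ (a - x) * (‖φ x‖ : ℂ) ∂μ) (cocompact X) (nhds 0))) ∧
    -- (1) ↔ (3)
    ((∀ K : Set X, IsCompact K →
        Tendsto (fun a : X => ∫ x in a +ᵥ K, ‖φ x‖ ∂μ) (cocompact X) (nhds 0)) ↔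
      (∀ ε > (0 : ℝ), ∃ K : Set X, K ∈ nhds (0 : X) ∧ IsCompact K ∧
        Tendsto (fun a : X => μ ({x : X | ε < ‖φ x‖} ∩ (a +ᵥ K)))
          (cocompact X) (nhds 0))) := by
  obtain ⟨M₀, hM₀⟩ := hbdd
  set M : ℝ := max M₀ 0 with hMdef
  have hM : ∀ x, ‖φ x‖ ≤ M := fun x => (hM₀ x).trans (le_max_left _ _)
  have hM0 : 0 ≤ M := le_max_right _ _
  -- integrability of ‖φ‖ on finite measure sets
  have hintR : ∀ s : Set X, μ s ≠ ⊤ → IntegrableOn (fun x => ‖φ x‖) s μ := by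
    intro s hs
    exact Measure.integrableOn_of_bounded hs hmeas.norm.aestronglyMeasurable
      (ae_of_all _ fun x => by simpa [Real.norm_of_nonneg (norm_nonneg _)] using hM x)
  have hintC : ∀ s : Set X, μ s ≠ ⊤ → IntegrableOn (fun x => (‖φ x‖ : ℂ)) s μ := by
    intro s hs
    exact Measure.integrableOn_of_bounded hs
      (Complex.continuous_ofReal.measurable.comp hmeas.norm).aestronglyMeasurable
      (ae_of_all _ fun x => by simpa using hM x)
  have hvaddmeas : ∀ (a : X) (K : Set X), IsCompact K → MeasurableSet (a +ᵥ K) := by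
    intro a K hK
    exact ((hK.vadd a).isClosed).measurableSet
  have hvaddfin : ∀ (a : X) (K : Set X), IsCompact K → μ (a +ᵥ K) ≠ ⊤ := by
    intro a K hK
    exact (hK.vadd a).measure_lt_top.ne
  constructor
  · -- (1) ↔ (2)
    constructor
    · -- (1) → (2)
      intro h1 θ hθ
      -- continuity via convolution theory
      have hloc : LocallyIntegrable (fun x => (‖φ x‖ : ℂ)) μ := by
        rw [locallyIntegrable_iff]
        intro K hK
        exact hintC K hK.measure_lt_top.ne
      have hconv : Continuous
          ((fun x => (‖φ x‖ : ℂ)) ⋆[ContinuousLinearMap.mul ℂ ℂ, μ] ⇑θ) :=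
        hθ.continuous_convolution_right _ hloc θ.continuous
      have heq : (fun a : X => ∫ x, θ (a - x) * (‖φ x‖ : ℂ) ∂μ) =
          ((fun x => (‖φ x‖ : ℂ)) ⋆[ContinuousLinearMap.mul ℂ ℂ, μ] ⇑θ) := by
        funext a
        simp only [convolution_def, ContinuousLinearMap.mul_apply']
        exact integral_congr_ae (ae_of_all _ fun x => mul_comm _ _)
      refine ⟨heq ▸ hconv, ?_⟩
      -- vanishing at infinity
      set K : Set X := -(tsupport ⇑θ) with hKdef
      have hKc : IsCompact K := hθ.isCompact.neg
      obtain ⟨C, hC⟩ : ∃ C : ℝ, ∀ x, ‖θ x‖ ≤ C :=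
        θ.continuous.bounded_above_of_compact_support hθ
      have hC0 : 0 ≤ C := le_trans (norm_nonneg _) (hC 0)
      refine squeeze_zero_norm (a := fun b => C * ∫ x in b +ᵥ K, ‖φ x‖ ∂μ) (f := fun b => ∫ x, θ (b - x) * (‖φ x‖ : ℂ) ∂μ) ?_ ?_
      · intro a
        have hsub : ∀ x : X, x ∉ a +ᵥ K → ‖θ (a - x)‖ * ‖φ x‖ = 0 := by
          intro x hx
          have : a - x ∉ tsupport ⇑θ := by
            intro h
            exact hx (Set.mem_vadd_set_iff_neg_vadd_mem.2 (by
              simpa [hKdef, neg_add_eq_sub] using Set.neg_mem_neg.2 h))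
          rw [image_eq_zero_of_notMem_tsupport this, norm_zero, zero_mul]
        calc ‖∫ x, θ (a - x) * (‖φ x‖ : ℂ) ∂μ‖
            ≤ ∫ x, ‖θ (a - x) * (‖φ x‖ : ℂ)‖ ∂μ := norm_integral_le_integral_norm _
          _ = ∫ x, ‖θ (a - x)‖ * ‖φ x‖ ∂μ := by
              congr 1; funext x; simp [norm_mul, abs_of_nonneg (norm_nonneg (φ x))]
          _ = ∫ x in a +ᵥ K, ‖θ (a - x)‖ * ‖φ x‖ ∂μ :=
              (setIntegral_eq_integral_of_forall_compl_eq_zero hsub).symm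
          _ ≤ ∫ x in a +ᵥ K, C * ‖φ x‖ ∂μ := by
              refine setIntegral_mono_on ?_ ?_ (hvaddmeas a K hKc) ?_
              · refine Measure.integrableOn_of_bounded (hvaddfin a K hKc)
                  ((θ.continuous.comp (continuous_const.sub
                    continuous_id)).measurable.norm.mul
                    hmeas.norm).aestronglyMeasurable (M := C * M)
                  (ae_of_all _ fun x => ?_)
                rw [Real.norm_of_nonneg (mul_nonneg (norm_nonneg _) (norm_nonneg _))]
                exact mul_le_mul (hC _) (hM x) (norm_nonneg _) hC0
              · exact (hintR _ (hvaddfin a K hKc)).const_mul C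
              · intro x _
                exact mul_le_mul_of_nonneg_right (hC _) (norm_nonneg _)
          _ = C * ∫ x in a +ᵥ K, ‖φ x‖ ∂μ := integral_const_mul C _
      · simpa using (h1 K hKc).const_mul C
    · -- (2) → (1)
      intro h2 K hK
      obtain ⟨θ₀, hθ₀1, -, hθ₀supp, hθ₀01⟩ :=
        exists_continuous_one_zero_of_isCompact hK.neg isClosed_empty (Set.disjoint_empty _)
      set θ : C(X, ℂ) := ⟨fun x => ((θ₀ x : ℝ) : ℂ),
        Complex.continuous_ofReal.comp θ₀.continuous⟩ with hθdef
      have hθsupp : HasCompactSupport ⇑θ :=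
        hθ₀supp.comp_left (g := Complex.ofReal) Complex.ofReal_zero
      have hT := (h2 θ hθsupp).2
      -- real-valued version
      have hre : Tendsto (fun a : X => ∫ x, θ₀ (a - x) * ‖φ x‖ ∂μ) (cocompact X)
          (nhds 0) := by
        have h1 : ∀ a : X, (∫ x, θ₀ (a - x) * ‖φ x‖ ∂μ : ℝ) =
            (∫ x, θ (a - x) * (‖φ x‖ : ℂ) ∂μ).re := by
          intro a
          have : (∫ x, θ (a - x) * (‖φ x‖ : ℂ) ∂μ) =
              ((∫ x, θ₀ (a - x) * ‖φ x‖ ∂μ : ℝ) : ℂ) := by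
            rw [show ((∫ x, θ₀ (a - x) * ‖φ x‖ ∂μ : ℝ) : ℂ) =
                ∫ x, ((θ₀ (a - x) * ‖φ x‖ : ℝ) : ℂ) ∂μ from integral_ofReal.symm]
            exact integral_congr_ae (ae_of_all _ fun x => by
              simp only [hθdef, ContinuousMap.coe_mk]; push_cast; ring)
          rw [this, Complex.ofReal_re]
        simp only [h1]
        simpa [Function.comp_def] using (Complex.continuous_re.tendsto 0).comp hT
      refine squeeze_zero (fun a => integral_nonneg fun x => norm_nonneg _) ?_ hre
      intro a
      -- integrability of the big integrand
      set S : Set X := a +ᵥ -(tsupport ⇑θ₀) with hSdef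
      have hSc : IsCompact (-(tsupport ⇑θ₀)) := hθ₀supp.isCompact.neg
      have hbig : Integrable (fun x => θ₀ (a - x) * ‖φ x‖) μ := by
        have hvanish : Function.support (fun x => θ₀ (a - x) * ‖φ x‖) ⊆ S := by
          intro x hx
          rcases mul_ne_zero_iff.1 hx with ⟨h1, -⟩
          have : a - x ∈ tsupport ⇑θ₀ := subset_tsupport _ h1
          exact Set.mem_vadd_set_iff_neg_vadd_mem.2 (by
            simpa [neg_add_eq_sub] using Set.neg_mem_neg.2 this)
        rw [← Set.indicator_eq_self.2 hvanish]
        rw [integrable_indicator_iff (hvaddmeas a _ hSc)]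
        refine Measure.integrableOn_of_bounded (hvaddfin a _ hSc)
          ((θ₀.continuous.comp (continuous_const.sub continuous_id)).measurable.mul
            hmeas.norm).aestronglyMeasurable (M := M) (ae_of_all _ fun x => ?_)
        have h01 := hθ₀01 (a - x)
        rw [Real.norm_eq_abs, abs_mul, abs_of_nonneg h01.1,
          abs_of_nonneg (norm_nonneg _)]
        calc θ₀ (a - x) * ‖φ x‖ ≤ 1 * ‖φ x‖ :=
              mul_le_mul_of_nonneg_right h01.2 (norm_nonneg _)
          _ ≤ M := by simpa using hM x
      calc ∫ x in a +ᵥ K, ‖φ x‖ ∂μ ≤ ∫ x in a +ᵥ K, θ₀ (a - x) * ‖φ x‖ ∂μ := by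
            refine setIntegral_mono_on (hintR _ (hvaddfin a K hK))
              (hbig.integrableOn) (hvaddmeas a K hK) ?_
            intro x hx
            have hmem : a - x ∈ -K := by
              have := Set.mem_vadd_set_iff_neg_vadd_mem.1 hx
              simpa [neg_add_eq_sub] using Set.neg_mem_neg.2 this
            rw [hθ₀1 hmem]
            simp
        _ ≤ ∫ x, θ₀ (a - x) * ‖φ x‖ ∂μ := by
            refine setIntegral_le_integral hbig (ae_of_all _ fun x => ?_)
            exact mul_nonneg (hθ₀01 (a - x)).1 (norm_nonneg _)
  · -- (1) ↔ (3)
    have hS : ∀ ε : ℝ, MeasurableSet {x : X | ε < ‖φ x‖} :=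
      fun ε => measurableSet_lt measurable_const hmeas.norm
    constructor
    · -- (1) → (3)
      intro h1 ε hε
      obtain ⟨K, hKc, hKn⟩ := exists_compact_mem_nhds (0 : X)
      refine ⟨K, hKn, hKc, ?_⟩
      rw [ENNReal.tendsto_nhds_zero]
      intro δ hδ
      set d : ℝ := (min δ 1).toReal with hddef
      have hd : 0 < d := ENNReal.toReal_pos (lt_min hδ zero_lt_one).ne'
        (ne_top_of_le_ne_top ENNReal.one_ne_top (min_le_right _ _))
      filter_upwards [(h1 K hKc).eventually_lt_const (mul_pos hε hd)] with a ha
      have hkey : ENNReal.ofReal ε * μ ({x : X | ε < ‖φ x‖} ∩ (a +ᵥ K)) ≤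
          ENNReal.ofReal (∫ x in a +ᵥ K, ‖φ x‖ ∂μ) := by
        rw [ofReal_integral_eq_lintegral_ofReal (hintR _ (hvaddfin a K hKc))
          (ae_of_all _ fun x => norm_nonneg _)]
        calc ENNReal.ofReal ε * μ ({x : X | ε < ‖φ x‖} ∩ (a +ᵥ K))
            = ENNReal.ofReal ε * (μ.restrict (a +ᵥ K)) {x : X | ε < ‖φ x‖} := by
              rw [Measure.restrict_apply (hS ε)]
          _ ≤ ENNReal.ofReal ε *
              (μ.restrict (a +ᵥ K)) {x : X | ENNReal.ofReal ε ≤ ENNReal.ofReal ‖φ x‖} := by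
              gcongr
              exact fun hx => ENNReal.ofReal_le_ofReal (le_of_lt hx)
          _ ≤ ∫⁻ x in a +ᵥ K, ENNReal.ofReal ‖φ x‖ ∂μ :=
              mul_meas_ge_le_lintegral₀
                (ENNReal.measurable_ofReal.comp hmeas.norm).aemeasurable _
      have hle : μ ({x : X | ε < ‖φ x‖} ∩ (a +ᵥ K)) ≤ ENNReal.ofReal d := by
        have h2 : ENNReal.ofReal ε * μ ({x : X | ε < ‖φ x‖} ∩ (a +ᵥ K)) ≤
            ENNReal.ofReal ε * ENNReal.ofReal d := by
          refine hkey.trans ?_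
          rw [← ENNReal.ofReal_mul hε.le]
          exact ENNReal.ofReal_le_ofReal ha.le
        exact (ENNReal.mul_le_mul_iff_right (ENNReal.ofReal_pos.2 hε).ne' ENNReal.ofReal_ne_top).1 h2
      exact hle.trans ((ENNReal.ofReal_toReal_le).trans (min_le_left _ _))
    · -- (3) → (1)
      intro h3 K hK
      rw [NormedAddCommGroup.tendsto_nhds_zero]
      intro ε' hε'
      set c : ℝ := (μ K).toReal with hcdef
      have hc0 : 0 ≤ c := ENNReal.toReal_nonneg
      set ε : ℝ := ε' / (2 * (c + 1)) with hεdef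
      have hε : 0 < ε := by positivity
      obtain ⟨K₀, hK₀n, hK₀c, hT⟩ := h3 ε hε
      set S : Set X := {x : X | ε < ‖φ x‖} with hSdef
      -- cover K by finitely many translates of K₀
      obtain ⟨t, htK, hcover⟩ := hK.elim_nhds_subcover (fun x => x +ᵥ interior K₀)
        (fun x _ => by
          refine (isOpen_interior.vadd x).mem_nhds ?_
          exact Set.mem_vadd_set_iff_neg_vadd_mem.2 (by
            simpa using mem_interior_iff_mem_nhds.2 hK₀n))
      have hGle : ∀ a : X, μ (S ∩ (a +ᵥ K)) ≤
          ∑ x ∈ t, μ (S ∩ ((a + x) +ᵥ K₀)) := by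
        intro a
        refine le_trans (measure_mono ?_) (measure_biUnion_finset_le _ _)
        intro y ⟨hyS, hyK⟩
        obtain ⟨z, hz⟩ := Set.mem_vadd_set.1 hyK
        obtain ⟨x, hxt, hx⟩ := Set.mem_iUnion₂.1 (hcover hz.1)
        refine Set.mem_iUnion₂.2 ⟨x, hxt, hyS, ?_⟩
        rw [← hz.2]
        obtain ⟨w, hw⟩ := Set.mem_vadd_set.1 hx
        refine Set.mem_vadd_set.2 ⟨w, interior_subset hw.1, ?_⟩
        rw [← hw.2]
        simp only [vadd_eq_add]
        abel
      have hGtend : Tendsto (fun a : X => μ (S ∩ (a +ᵥ K))) (cocompact X) (nhds 0) := by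
        refine tendsto_of_tendsto_of_tendsto_of_le_of_le tendsto_const_nhds ?_
          (fun a => zero_le) hGle
        have : Tendsto (fun a : X => ∑ x ∈ t, μ (S ∩ ((a + x) +ᵥ K₀)))
            (cocompact X) (nhds (∑ _x ∈ t, 0)) := by
          refine tendsto_finset_sum _ fun x _ => ?_
          exact hT.comp (Homeomorph.addRight x).map_cocompact.le
        simpa using this
      have hβ : (0:ℝ) < ε' / (2 * (M + 1)) := by positivity
      filter_upwards [hGtend.eventually_lt_const (ENNReal.ofReal_pos.2 hβ)] with a ha
      -- now bound the integral
      have hfin : μ (S ∩ (a +ᵥ K)) ≠ ⊤ :=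
        (lt_of_le_of_lt (measure_mono Set.inter_subset_right)
          ((hK.vadd a).measure_lt_top)).ne
      have hInt : ∫ x in a +ᵥ K, ‖φ x‖ ∂μ =
          (∫⁻ x in a +ᵥ K, ENNReal.ofReal ‖φ x‖ ∂μ).toReal := by
        rw [← ofReal_integral_eq_lintegral_ofReal (hintR _ (hvaddfin a K hK))
          (ae_of_all _ fun x => norm_nonneg _),
          ENNReal.toReal_ofReal (integral_nonneg fun x => norm_nonneg _)]
      have hlin : ∫⁻ x in a +ᵥ K, ENNReal.ofReal ‖φ x‖ ∂μ ≤
          ENNReal.ofReal M * μ (S ∩ (a +ᵥ K)) + ENNReal.ofReal ε * μ K := by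
        calc ∫⁻ x in a +ᵥ K, ENNReal.ofReal ‖φ x‖ ∂μ
            ≤ ∫⁻ x in a +ᵥ K,
                (S.indicator (fun _ => ENNReal.ofReal M) x + ENNReal.ofReal ε) ∂μ := by
              refine lintegral_mono fun x => ?_
              by_cases hx : x ∈ S
              · rw [Set.indicator_of_mem hx]
                exact le_add_right (ENNReal.ofReal_le_ofReal (hM x))
              · rw [Set.indicator_of_notMem hx]
                have : ‖φ x‖ ≤ ε := le_of_not_gt hx
                simpa using ENNReal.ofReal_le_ofReal this
          _ = (∫⁻ x in a +ᵥ K, S.indicator (fun _ => ENNReal.ofReal M) x ∂μ) +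
                ENNReal.ofReal ε * μ (a +ᵥ K) := by
              rw [lintegral_add_right _ measurable_const, setLIntegral_const]
          _ = ENNReal.ofReal M * μ (S ∩ (a +ᵥ K)) + ENNReal.ofReal ε * μ K := by
              rw [lintegral_indicator (hS ε), setLIntegral_const,
                Measure.restrict_apply (hS ε), measure_vadd]
      have hFa : ∫ x in a +ᵥ K, ‖φ x‖ ∂μ ≤
          M * (μ (S ∩ (a +ᵥ K))).toReal + ε * c := by
        rw [hInt]
        have hrhs : ENNReal.ofReal M * μ (S ∩ (a +ᵥ K)) + ENNReal.ofReal ε * μ K ≠ ⊤ := by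
          refine ENNReal.add_ne_top.2 ⟨?_, ?_⟩
          · exact ENNReal.mul_ne_top ENNReal.ofReal_ne_top hfin
          · exact ENNReal.mul_ne_top ENNReal.ofReal_ne_top hK.measure_lt_top.ne
        refine le_trans (ENNReal.toReal_mono hrhs hlin) ?_
        rw [ENNReal.toReal_add (ENNReal.mul_ne_top ENNReal.ofReal_ne_top hfin)
          (ENNReal.mul_ne_top ENNReal.ofReal_ne_top hK.measure_lt_top.ne),
          ENNReal.toReal_mul, ENNReal.toReal_mul,
          ENNReal.toReal_ofReal hM0, ENNReal.toReal_ofReal hε.le]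
      have hμlt : (μ (S ∩ (a +ᵥ K))).toReal ≤ ε' / (2 * (M + 1)) :=
        ENNReal.toReal_le_of_le_ofReal hβ.le ha.le
      have hnn : 0 ≤ ∫ x in a +ᵥ K, ‖φ x‖ ∂μ := integral_nonneg fun x => norm_nonneg _
      rw [Real.norm_of_nonneg hnn]
      have h1 : M * (μ (S ∩ (a +ᵥ K))).toReal < ε' / 2 := by
        calc M * (μ (S ∩ (a +ᵥ K))).toReal ≤ M * (ε' / (2 * (M + 1))) := by
              exact mul_le_mul_of_nonneg_left hμlt hM0
          _ < ε' / 2 := by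
              rw [← mul_div_assoc, div_lt_div_iff₀ (by positivity) two_pos]
              nlinarith
      have h2 : ε * c < ε' / 2 := by
        rw [hεdef, div_mul_eq_mul_div, div_lt_div_iff₀ (by positivity) two_pos]
        nlinarith
      linarith [hFa]
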